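/- For every q ≥ 2 and n ≥ 0, there exists an orthogonal direct sum decomposition of V(B_q(n)) into upper Boolean subspaces such that, for each l = 0, 1, …, n, exactly (q−2)^l · C(n,l) of the summands are upper Boolean subspaces of rank n−l. -/

import Mathlib

/-- The support of a `q`-ary `n`-tuple.  The elements of `B_q(n)` are encoded as
`n`-tuples with entries in `{0,1,…,q-1}`. -/
def supp {n q : ℕ} (a : Fin n → Fin q) : Finset (Fin n) :=
  Finset.univ.filter (fun i => (a i : ℕ) ≠ 0)

/-- The rank of an element of `B_q(n)`. -/
def rk {n q : ℕ} (a : Fin n → Fin q) : ℕ := (supp a).card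

/-- The covering relation of the poset `B_q(n)`. -/
def covers {n q : ℕ} (a b : Fin n → Fin q) : Prop :=
  supp a ⊆ supp b ∧ (supp a).card + 1 = (supp b).card ∧ ∀ i ∈ supp a, a i = b i

/-- `V(B_q(n))`: the complex inner product space with the elements of `B_q(n)` as an
orthonormal basis. -/
abbrev VQ (n q : ℕ) := EuclideanSpace ℂ (Fin n → Fin q)

/-- `V(B(t))`: the complex inner product space with the subsets of `[t]` as an
orthonormal basis. -/
abbrev VB (t : ℕ) := EuclideanSpace ℂ (Finset (Fin t))

open scoped Classical in
/-- The up operator on `V(B_q(n))`. -/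
noncomputable def upQ (n q : ℕ) (f : VQ n q) : VQ n q := WithLp.toLp 2 (fun b =>
  ∑ a ∈ Finset.univ.filter (fun a => covers a b), f a)

/-- The up operator on `V(B(t))`. -/
noncomputable def upB (t : ℕ) (f : VB t) : VB t := WithLp.toLp 2 (fun T =>
  ∑ S ∈ T.powerset.filter (fun S => S.card + 1 = T.card), f S)

/-- Homogeneity of rank `r` in `V(B_q(n))`. -/
def isHomQ {n q : ℕ} (r : ℕ) (f : VQ n q) : Prop :=
  ∀ a : Fin n → Fin q, rk a ≠ r → f a = 0

/-- Homogeneity of rank `r` in `V(B(t))`. -/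
def isHomB {t : ℕ} (r : ℕ) (f : VB t) : Prop :=
  ∀ S : Finset (Fin t), S.card ≠ r → f S = 0

/-- The homogeneous component of rank `r` of a vector of `V(B_q(n))`. -/
noncomputable def homComp {n q : ℕ} (r : ℕ) (f : VQ n q) : VQ n q := WithLp.toLp 2 (fun a =>
  if rk a = r then f a else 0)

/-- An upper Boolean subspace of rank `t`: a homogeneous subspace `W` of `V(B_q(n))` with
rank set `{n-t, …, n}`, closed under the up operator, for which there is a linear isometry
`θ : V(B(t)) → V(B_q(n))` with range `W` that sends homogeneous elements to homogeneous
elements, increases rank by `n-t`, and intertwines `√(q-1)·U` with `U`. -/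
def IsUpperBooleanSubspace (q n t : ℕ) (W : Submodule ℂ (VQ n q)) : Prop :=
  t ≤ n ∧
  (∀ f ∈ W, ∀ r : ℕ, homComp r f ∈ W) ∧
  {r : ℕ | ∃ f ∈ W, f ≠ 0 ∧ isHomQ r f} = Set.Icc (n - t) n ∧
  (∀ f ∈ W, upQ n q f ∈ W) ∧
  ∃ θ : VB t →ₗᵢ[ℂ] VQ n q,
    LinearMap.range θ.toLinearMap = W ∧
    (∀ (f : VB t) (r : ℕ), isHomB r f → isHomQ (r + (n - t)) (θ f)) ∧
    (∀ f : VB t, θ (((Real.sqrt ((q - 1 : ℕ)) : ℝ) : ℂ) • upB t f) = upQ n q (θ f))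

open Finset
set_option maxHeartbeats 1000000

namespace UBS

variable (q n : ℕ)

/-- per-coordinate basis vectors, `k`-th vector evaluated at `x`. -/
noncomputable def psi (w : Fin (q-1) → Fin (q-1) → ℂ) (k : ℕ) (x : Fin q) : ℂ :=
  if k = 0 then (if (x:ℕ) = 0 then 1 else 0)
  else if hx : (x:ℕ) = 0 then 0
  else if hk : k - 1 < q - 1 then
    w ⟨k-1, hk⟩ ⟨(x:ℕ)-1, by have := x.isLt; omega⟩ else 0

noncomputable def Phi (w : Fin (q-1) → Fin (q-1) → ℂ) (u : Fin n → ℕ) :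
    EuclideanSpace ℂ (Fin n → Fin q) := WithLp.toLp 2 (fun a => ∏ i, psi q w (u i) (a i))

lemma sum_shift (hq : 1 ≤ q) (F : ℕ → ℂ) (h0 : F 0 = 0) :
    ∑ x : Fin q, F (x:ℕ) = ∑ y : Fin (q-1), F ((y:ℕ)+1) := by
  rw [Fin.sum_univ_eq_sum_range, Fin.sum_univ_eq_sum_range (fun m => F (m+1)) (q-1)]
  obtain ⟨m, rfl⟩ : ∃ m, q = m + 1 := ⟨q-1, by omega⟩
  simp only [Nat.add_sub_cancel]
  rw [Finset.sum_range_succ']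
  simp [h0]

lemma psi_inner (hq : 2 ≤ q) (w : Fin (q-1) → Fin (q-1) → ℂ)
    (hw : ∀ j j' : Fin (q-1), ∑ y, (starRingEnd ℂ) (w j y) * w j' y = if j = j' then 1 else 0)
    (k k' : ℕ) (hk : k < q) (hk' : k' < q) :
    ∑ x : Fin q, (starRingEnd ℂ) (psi q w k x) * psi q w k' x = if k = k' then 1 else 0 := by
  by_cases h0 : k = 0 <;> by_cases h0' : k' = 0
  · subst h0 h0'
    simp only [psi, if_true]
    rw [show (∑ x : Fin q, (starRingEnd ℂ) (if (x:ℕ) = 0 then (1:ℂ) else 0) *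
        (if (x:ℕ) = 0 then (1:ℂ) else 0)) = ∑ x : Fin q, (if (x:ℕ) = 0 then (1:ℂ) else 0) from
      Finset.sum_congr rfl (by intro x _; by_cases hx : (x:ℕ) = 0 <;> simp [hx])]
    rw [Fin.sum_univ_eq_sum_range (fun m => if m = 0 then (1:ℂ) else 0) q]
    obtain ⟨m, rfl⟩ : ∃ m, q = m + 1 := ⟨q-1, by omega⟩
    rw [Finset.sum_range_succ']
    simp
  · rw [if_neg (by omega)]
    apply Finset.sum_eq_zero; intro x _
    by_cases hx : (x:ℕ) = 0 <;> simp [psi, h0, h0', hx]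
  · rw [if_neg (by omega)]
    apply Finset.sum_eq_zero; intro x _
    by_cases hx : (x:ℕ) = 0 <;> simp [psi, h0, h0', hx]
  · have hk1 : k - 1 < q - 1 := by omega
    have hk'1 : k' - 1 < q - 1 := by omega
    set G : ℕ → ℂ := fun m => if hm : m < q - 1 then
      (starRingEnd ℂ) (w ⟨k-1, hk1⟩ ⟨m, hm⟩) * w ⟨k'-1, hk'1⟩ ⟨m, hm⟩ else 0 with hG
    have step : ∀ x : Fin q, (starRingEnd ℂ) (psi q w k x) * psi q w k' x
        = (fun m => if m = 0 then 0 else G (m-1)) (x:ℕ) := by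
      intro x
      by_cases hx : (x:ℕ) = 0
      · simp [psi, h0, h0', hx]
      · have hxlt : (x:ℕ) - 1 < q - 1 := by have := x.isLt; omega
        simp only [psi, if_neg h0, if_neg h0', dif_neg hx, dif_pos hk1, dif_pos hk'1,
          if_neg hx, hG, dif_pos hxlt]
    calc ∑ x : Fin q, (starRingEnd ℂ) (psi q w k x) * psi q w k' x
        = ∑ x : Fin q, (fun m => if m = 0 then 0 else G (m-1)) (x:ℕ) :=
          Finset.sum_congr rfl (fun x _ => step x)
      _ = ∑ y : Fin (q-1), G (y:ℕ) := by
          simpa using sum_shift q (by omega) (fun m => if m = 0 then 0 else G (m-1)) (by simp)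
      _ = ∑ y : Fin (q-1), (starRingEnd ℂ) (w ⟨k-1, hk1⟩ y) * w ⟨k'-1, hk'1⟩ y := by
          apply Finset.sum_congr rfl; intro y _
          simp [hG, y.isLt]
      _ = if k = k' then 1 else 0 := by
          rw [hw]
          congr 1
          simp only [Fin.mk.injEq, eq_iff_iff]
          omega

lemma Phi_inner (hq : 2 ≤ q) (w : Fin (q-1) → Fin (q-1) → ℂ)
    (hw : ∀ j j' : Fin (q-1), ∑ y, (starRingEnd ℂ) (w j y) * w j' y = if j = j' then 1 else 0)
    (u u' : Fin n → ℕ) (hu : ∀ i, u i < q) (hu' : ∀ i, u' i < q) :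
    inner ℂ (Phi q n w u) (Phi q n w u') = if u = u' then (1:ℂ) else 0 := by
  have h1 : inner ℂ (Phi q n w u) (Phi q n w u')
      = ∑ a : Fin n → Fin q, ∏ i, ((starRingEnd ℂ) (psi q w (u i) (a i)) * psi q w (u' i) (a i)) := by
    simp only [PiLp.inner_apply, RCLike.inner_apply, Phi, PiLp.toLp_apply, map_prod, Finset.prod_mul_distrib]
    exact Finset.sum_congr rfl (fun _ _ => mul_comm _ _)
  have swap : (∏ i : Fin n, ∑ x : Fin q,
        ((starRingEnd ℂ) (psi q w (u i) x) * psi q w (u' i) x))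
      = ∑ a : Fin n → Fin q, ∏ i, ((starRingEnd ℂ) (psi q w (u i) (a i)) * psi q w (u' i) (a i)) := by
    rw [Finset.prod_univ_sum]
    rw [Fintype.piFinset_univ]
  rw [h1, ← swap]
  have h2 : ∀ i : Fin n, (∑ x : Fin q, (starRingEnd ℂ) (psi q w (u i) x) * psi q w (u' i) x)
      = if u i = u' i then (1:ℂ) else 0 := fun i => psi_inner q hq w hw _ _ (hu i) (hu' i)
  rw [Finset.prod_congr rfl (fun i _ => h2 i)]
  by_cases h : u = u'
  · simp [h]
  · obtain ⟨i, hi⟩ : ∃ i, u i ≠ u' i := by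
      by_contra hc; push_neg at hc; exact h (funext hc)
    rw [if_neg h]
    exact Finset.prod_eq_zero (Finset.mem_univ i) (by simp [hi])

lemma psi_ne_zero_iff (w : Fin (q-1) → Fin (q-1) → ℂ) (k : ℕ) (x : Fin q)
    (h : psi q w k x ≠ 0) : ((x:ℕ) = 0 ↔ k = 0) := by
  unfold psi at h
  by_cases h0 : k = 0 <;> by_cases hx : (x:ℕ) = 0 <;> simp_all

/-- number of coordinates where `c` is zero -/
def tdeg (c : Fin n → Fin (q-1)) : ℕ := (univ.filter fun i => (c i : ℕ) = 0).card

lemma tdeg_le (c : Fin n → Fin (q-1)) : tdeg q n c ≤ n := by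
  simpa [tdeg] using (Finset.card_filter_le univ (fun i => (c i : ℕ) = 0))

noncomputable def emb (c : Fin n → Fin (q-1)) (j : Fin (tdeg q n c)) : Fin n :=
  ((univ.filter fun i => (c i : ℕ) = 0).orderIsoOfFin rfl j : Fin n)

lemma emb_mem (c : Fin n → Fin (q-1)) (j : Fin (tdeg q n c)) : (c (emb q n c j) : ℕ) = 0 := by
  have := ((univ.filter fun i => (c i : ℕ) = 0).orderIsoOfFin rfl j).2
  simpa [emb] using (Finset.mem_filter.mp this).2

lemma emb_inj (c : Fin n → Fin (q-1)) : Function.Injective (emb q n c) := by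
  intro j j' h
  exact (Finset.orderIsoOfFin _ rfl).injective (Subtype.ext h)

lemma emb_surj (c : Fin n → Fin (q-1)) (i : Fin n) (hi : (c i : ℕ) = 0) :
    ∃ j, emb q n c j = i := by
  have hmem : i ∈ univ.filter fun i => (c i : ℕ) = 0 := by simp [hi]
  exact ⟨(Finset.orderIsoOfFin _ rfl).symm ⟨i, hmem⟩, by simp [emb]⟩

noncomputable def ucs (c : Fin n → Fin (q-1)) (S : Finset (Fin (tdeg q n c))) : Fin n → ℕ :=
  fun i => if (c i : ℕ) = 0 then (if i ∈ S.image (emb q n c) then 1 else 0) else (c i : ℕ) + 1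

lemma ucs_lt (hq : 2 ≤ q) (c : Fin n → Fin (q-1)) (S : Finset (Fin (tdeg q n c))) (i : Fin n) :
    ucs q n c S i < q := by
  unfold ucs
  have := (c i).isLt
  split
  · split <;> omega
  · omega

lemma ucs_eq_zero_iff (c : Fin n → Fin (q-1)) (S : Finset (Fin (tdeg q n c))) (i : Fin n) :
    ucs q n c S i = 0 ↔ ((c i : ℕ) = 0 ∧ i ∉ S.image (emb q n c)) := by
  unfold ucs
  split <;> rename_i h1
  · split <;> simp_all
  · simp [h1]

lemma mem_image_emb_iff (c : Fin n → Fin (q-1)) (T : Finset (Fin (tdeg q n c)))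
    (j : Fin (tdeg q n c)) : emb q n c j ∈ T.image (emb q n c) ↔ j ∈ T := by
  simp only [Finset.mem_image]
  constructor
  · rintro ⟨j', hj', he⟩; rwa [← emb_inj q n c he]
  · intro hT; exact ⟨j, hT, rfl⟩

lemma ucs_inj_S (c : Fin n → Fin (q-1)) (S S' : Finset (Fin (tdeg q n c)))
    (h : ucs q n c S = ucs q n c S') : S = S' := by
  ext j
  have hj := congrFun h (emb q n c j)
  have hc := emb_mem q n c j
  simp only [ucs, if_pos hc] at hj
  by_cases h1 : j ∈ S <;> by_cases h2 : j ∈ S' <;>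
    simp_all [mem_image_emb_iff q n c S j, mem_image_emb_iff q n c S' j]

lemma ucs_inj_c (c c' : Fin n → Fin (q-1)) (S : Finset (Fin (tdeg q n c)))
    (S' : Finset (Fin (tdeg q n c'))) (h : ucs q n c S = ucs q n c' S') : c = c' := by
  funext i
  have hi := congrFun h i
  unfold ucs at hi
  apply Fin.ext
  by_cases h1 : (c i : ℕ) = 0 <;> by_cases h2 : (c' i : ℕ) = 0
  · omega
  · rw [if_pos h1, if_neg h2] at hi; split at hi <;> omega
  · rw [if_neg h1, if_pos h2] at hi; split at hi <;> omega
  · rw [if_neg h1, if_neg h2] at hi; omega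

lemma card_filter_ne (c : Fin n → Fin (q-1)) :
    (univ.filter fun i => (c i : ℕ) ≠ 0).card = n - tdeg q n c := by
  have h := Finset.card_filter_add_card_filter_not (s := (univ : Finset (Fin n)))
    (p := fun i => (c i : ℕ) = 0)
  have hn : (univ : Finset (Fin n)).card = n := by simp
  have ht := tdeg_le q n c
  unfold tdeg at *
  simp only [hn] at h
  have h2 : (univ.filter fun i => ¬ ((c i : ℕ) = 0)) = (univ.filter fun i => (c i : ℕ) ≠ 0) := rfl
  rw [h2] at h
  omega

lemma rk_Phi (w : Fin (q-1) → Fin (q-1) → ℂ) (c : Fin n → Fin (q-1))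
    (S : Finset (Fin (tdeg q n c))) (a : Fin n → Fin q)
    (h : Phi q n w (ucs q n c S) a ≠ 0) : rk a = (n - tdeg q n c) + S.card := by
  have hfac : ∀ i : Fin n, psi q w (ucs q n c S i) (a i) ≠ 0 := by
    intro i hzero
    exact h (Finset.prod_eq_zero (Finset.mem_univ i) hzero)
  have hsupp : supp a = (univ.filter fun i => (c i : ℕ) ≠ 0) ∪ S.image (emb q n c) := by
    ext i
    have hiff := psi_ne_zero_iff q w _ _ (hfac i)
    have h2 := ucs_eq_zero_iff q n c S i
    simp only [supp, Finset.mem_filter, Finset.mem_univ, true_and, Finset.mem_union]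
    constructor
    · intro ha
      have h3 : ucs q n c S i ≠ 0 := fun hz => ha (hiff.mpr hz)
      simp only [ne_eq, h2] at h3
      push_neg at h3
      by_cases hc : (c i : ℕ) = 0
      · exact Or.inr (h3 hc)
      · exact Or.inl hc
    · intro hor
      have h3 : ucs q n c S i ≠ 0 := by
        simp only [ne_eq, h2]
        rcases hor with hc | him
        · tauto
        · rintro ⟨_, h4⟩; exact h4 him
      intro ha0
      exact h3 (hiff.mp ha0)
  have hdisj : Disjoint (univ.filter fun i => (c i : ℕ) ≠ 0) (S.image (emb q n c)) := by
    rw [Finset.disjoint_left]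
    intro i hi him
    obtain ⟨j, _, rfl⟩ := Finset.mem_image.mp him
    have := emb_mem q n c j
    simp only [Finset.mem_filter] at hi
    omega
  rw [rk, hsupp, Finset.card_union_of_disjoint hdisj, card_filter_ne,
    Finset.card_image_of_injective _ (emb_inj q n c)]
-- apply helpers for EuclideanSpace
lemma VQsum_apply {ι' : Type*} [Fintype ι'] (s : Finset ι')
    (F : ι' → EuclideanSpace ℂ (Fin n → Fin q)) (a : Fin n → Fin q) :
    (∑ i ∈ s, F i) a = ∑ i ∈ s, F i a := by
  induction s using Finset.cons_induction with
  | empty => rfl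
  | cons i s hi ih => rw [Finset.sum_cons, Finset.sum_cons, ← ih]; rfl

lemma VBsum_apply {t : ℕ} {ι' : Type*} (s : Finset ι')
    (F : ι' → VB t) (T : Finset (Fin t)) :
    (∑ i ∈ s, F i) T = ∑ i ∈ s, F i T := by
  induction s using Finset.cons_induction with
  | empty => rfl
  | cons i s hi ih => rw [Finset.sum_cons, Finset.sum_cons, ← ih]; rfl

noncomputable def theta (w : Fin (q-1) → Fin (q-1) → ℂ) (c : Fin n → Fin (q-1)) :
    VB (tdeg q n c) →ₗ[ℂ] VQ n q where
  toFun f := ∑ S : Finset (Fin (tdeg q n c)), f S • Phi q n w (ucs q n c S)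
  map_add' f g := by
    simp only [PiLp.add_apply, add_smul, Finset.sum_add_distrib]
  map_smul' r f := by
    simp only [PiLp.smul_apply, RingHom.id_apply, smul_eq_mul, mul_smul, ← Finset.smul_sum]

lemma theta_apply_coord (w : Fin (q-1) → Fin (q-1) → ℂ) (c : Fin n → Fin (q-1))
    (f : VB (tdeg q n c)) (a : Fin n → Fin q) :
    theta q n w c f a = ∑ S : Finset (Fin (tdeg q n c)), f S * Phi q n w (ucs q n c S) a := by
  show (∑ S : Finset (Fin (tdeg q n c)), f S • Phi q n w (ucs q n c S)) a = _
  rw [VQsum_apply]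
  rfl

lemma theta_inner (hq : 2 ≤ q) (w : Fin (q-1) → Fin (q-1) → ℂ)
    (hw : ∀ j j' : Fin (q-1), ∑ y, (starRingEnd ℂ) (w j y) * w j' y = if j = j' then 1 else 0)
    (c : Fin n → Fin (q-1)) (f g : VB (tdeg q n c)) :
    inner ℂ (theta q n w c f) (theta q n w c g) = (inner ℂ f g : ℂ) := by
  show inner ℂ (∑ S : Finset (Fin (tdeg q n c)), f S • Phi q n w (ucs q n c S))
      (∑ S : Finset (Fin (tdeg q n c)), g S • Phi q n w (ucs q n c S)) = (inner ℂ f g : ℂ)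
  rw [sum_inner, PiLp.inner_apply]
  apply Finset.sum_congr rfl
  intro S _
  have : ∀ S' ∈ (univ : Finset (Finset (Fin (tdeg q n c)))),
      inner ℂ (f S • Phi q n w (ucs q n c S)) (g S' • Phi q n w (ucs q n c S'))
      = if S' = S then (starRingEnd ℂ) (f S) * g S else 0 := by
    intro S' _
    rw [inner_smul_left, inner_smul_right,
      Phi_inner q n hq w hw _ _ (ucs_lt q n hq c S) (ucs_lt q n hq c S')]
    by_cases hss : S' = S
    · subst hss; simp [mul_comm]
    · rw [if_neg (fun he => hss (ucs_inj_S q n c S S' he).symm)]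
      simp [hss]
  rw [inner_sum, Finset.sum_congr rfl this,
    Finset.sum_ite_eq' univ S (fun S' => (starRingEnd ℂ) (f S) * g S)]
  simp [RCLike.inner_apply, mul_comm]

lemma theta_single (w : Fin (q-1) → Fin (q-1) → ℂ) (c : Fin n → Fin (q-1))
    (S : Finset (Fin (tdeg q n c))) :
    theta q n w c (EuclideanSpace.single S 1) = Phi q n w (ucs q n c S) := by
  show (∑ S' : Finset (Fin (tdeg q n c)), (EuclideanSpace.single S (1:ℂ)) S' • Phi q n w (ucs q n c S')) = _
  have : ∀ S' ∈ (univ : Finset (Finset (Fin (tdeg q n c)))),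
      (EuclideanSpace.single S (1:ℂ)) S' • Phi q n w (ucs q n c S')
      = if S' = S then Phi q n w (ucs q n c S) else 0 := by
    intro S' _
    rw [EuclideanSpace.single_apply]
    by_cases hss : S' = S
    · subst hss; simp
    · simp [hss]
  rw [Finset.sum_congr rfl this, Finset.sum_ite_eq' univ S (fun _ => Phi q n w (ucs q n c S))]
  simp

-- decomposition of a VB vector into singles
lemma VB_decomp {t : ℕ} (f : VB t) :
    f = ∑ S : Finset (Fin t), f S • EuclideanSpace.single S 1 := by
  ext1 T
  rw [VBsum_apply]
  have : ∀ S ∈ (univ : Finset (Finset (Fin t))),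
      (f S • EuclideanSpace.single S (1:ℂ)) T = if S = T then f T else 0 := by
    intro S _
    show f S * (EuclideanSpace.single S (1:ℂ)) T = _
    rw [EuclideanSpace.single_apply]
    by_cases h : S = T
    · subst h; simp
    · simp [h, Ne.symm h]
  rw [Finset.sum_congr rfl this, Finset.sum_ite_eq' univ T (fun _ => f T)]
  simp

noncomputable def upQlm : VQ n q →ₗ[ℂ] VQ n q where
  toFun := upQ n q
  map_add' f g := by
    ext1 b
    show upQ n q (f + g) b = upQ n q f b + upQ n q g b
    simp only [upQ, PiLp.add_apply, Finset.sum_add_distrib]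
  map_smul' r f := by
    ext1 b
    show upQ n q (r • f) b = (r • upQ n q f) b
    simp only [upQ, PiLp.smul_apply, smul_eq_mul, Finset.mul_sum]

noncomputable def upBlm (t : ℕ) : VB t →ₗ[ℂ] VB t where
  toFun := upB t
  map_add' f g := by
    ext1 T
    show upB t (f + g) T = upB t f T + upB t g T
    simp only [upB, PiLp.add_apply, Finset.sum_add_distrib]
  map_smul' r f := by
    ext1 T
    show upB t (r • f) T = (r • upB t f) T
    simp only [upB, PiLp.smul_apply, smul_eq_mul, Finset.mul_sum]
lemma covers_iff (hq0 : 0 < q) (a b : Fin n → Fin q) :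
    covers a b ↔ ∃ i ∈ supp b, a = Function.update b i ⟨0, hq0⟩ := by
  constructor
  · rintro ⟨hsub, hcard, hagree⟩
    have hc1 : (supp b \ supp a).card = 1 := by
      rw [Finset.card_sdiff_of_subset hsub]; omega
    obtain ⟨i, hi⟩ := Finset.card_eq_one.mp hc1
    have hib : i ∈ supp b := by
      have : i ∈ supp b \ supp a := by rw [hi]; exact Finset.mem_singleton_self i
      exact (Finset.mem_sdiff.mp this).1
    have hia : i ∉ supp a := by
      have : i ∈ supp b \ supp a := by rw [hi]; exact Finset.mem_singleton_self i
      exact (Finset.mem_sdiff.mp this).2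
    refine ⟨i, hib, funext fun j => ?_⟩
    rcases eq_or_ne j i with rfl | hne
    · rw [Function.update_self]
      apply Fin.ext
      simp only [supp, Finset.mem_filter, Finset.mem_univ, true_and, not_not] at hia
      simpa using hia
    · rw [Function.update_of_ne hne]
      by_cases hja : j ∈ supp a
      · exact hagree j hja
      · have hjb : j ∉ supp b := by
          intro hjb
          have : j ∈ supp b \ supp a := Finset.mem_sdiff.mpr ⟨hjb, hja⟩
          rw [hi, Finset.mem_singleton] at this
          exact hne this
        apply Fin.ext
        simp only [supp, Finset.mem_filter, Finset.mem_univ, true_and, not_not] at hja hjb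
        rw [hja, hjb]
  · rintro ⟨i, hib, rfl⟩
    have hsupp : supp (Function.update b i ⟨0, hq0⟩) = supp b \ {i} := by
      ext j
      simp only [supp, Finset.mem_filter, Finset.mem_univ, true_and, Finset.mem_sdiff,
        Finset.mem_singleton]
      rcases eq_or_ne j i with rfl | hne
      · simp [Function.update_self]
      · simp [Function.update_of_ne hne, hne]
    have hibcard : 0 < (supp b).card := Finset.card_pos.mpr ⟨i, hib⟩
    have hsub2 : {i} ⊆ supp b := Finset.singleton_subset_iff.mpr hib
    refine ⟨?_, ?_, ?_⟩
    · rw [hsupp]; exact Finset.sdiff_subset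
    · rw [hsupp, Finset.card_sdiff_of_subset hsub2, Finset.card_singleton]; omega
    · intro j hj
      rw [hsupp, Finset.mem_sdiff, Finset.mem_singleton] at hj
      rw [Function.update_of_ne hj.2]

lemma upQ_eq (hq0 : 0 < q) (f : VQ n q) (b : Fin n → Fin q) :
    upQ n q f b = ∑ i ∈ supp b, f (Function.update b i ⟨0, hq0⟩) := by
  classical
  have hset : (univ.filter fun a => covers a b) = (supp b).image
      (fun i => Function.update b i ⟨0, hq0⟩) := by
    ext a
    simp only [Finset.mem_filter, Finset.mem_univ, true_and, Finset.mem_image,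
      covers_iff q n hq0]
    constructor
    · rintro ⟨i, hi, rfl⟩; exact ⟨i, hi, rfl⟩
    · rintro ⟨i, hi, rfl⟩; exact ⟨i, hi, rfl⟩
  rw [upQ, PiLp.toLp_apply]
  · rw [hset, Finset.sum_image]
    intro i hi i' hi' he
    by_contra hne
    have h1 : Function.update b i ⟨0, hq0⟩ i = Function.update b i' ⟨0, hq0⟩ i := congrFun he i
    rw [Function.update_self, Function.update_of_ne hne] at h1
    simp only [Finset.mem_coe, supp, Finset.mem_filter] at hi
    exact hi.2 (by simp [← h1])

lemma psi_z0 (hq0 : 0 < q) (w : Fin (q-1) → Fin (q-1) → ℂ) (k : ℕ) :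
    psi q w k ⟨0, hq0⟩ = if k = 0 then 1 else 0 := by
  by_cases hk : k = 0 <;> simp [psi, hk]

lemma psi_one (hq : 2 ≤ q) (w : Fin (q-1) → Fin (q-1) → ℂ)
    (hw0 : ∀ (j : Fin (q-1)), (j:ℕ) = 0 → ∀ y, w j y = ((Real.sqrt ((q-1 : ℕ)))⁻¹ : ℝ))
    (x : Fin q) :
    psi q w 1 x = if (x:ℕ) = 0 then 0 else (((Real.sqrt ((q-1 : ℕ)))⁻¹ : ℝ) : ℂ) := by
  by_cases hx : (x:ℕ) = 0
  · simp [psi, hx]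
  · have h1 : (1:ℕ) - 1 < q - 1 := by omega
    simp only [psi, if_neg (by norm_num : (1:ℕ) ≠ 0), dif_neg hx, dif_pos h1, if_neg hx]
    rw [hw0 ⟨0, h1⟩ rfl]

lemma Phi_update_arg (hq0 : 0 < q) (w : Fin (q-1) → Fin (q-1) → ℂ) (u : Fin n → ℕ)
    (b : Fin n → Fin q) (i : Fin n) :
    Phi q n w u (Function.update b i ⟨0, hq0⟩)
      = (if u i = 0 then 1 else 0) * ∏ j ∈ univ \ {i}, psi q w (u j) (b j) := by
  have hfun : (fun j => psi q w (u j) (Function.update b i ⟨0, hq0⟩ j))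
      = Function.update (fun j => psi q w (u j) (b j)) i (psi q w (u i) ⟨0, hq0⟩) := by
    funext j
    rcases eq_or_ne j i with rfl | hne
    · rw [Function.update_self, Function.update_self]
    · rw [Function.update_of_ne hne, Function.update_of_ne hne]
  show (∏ j, psi q w (u j) (Function.update b i ⟨0, hq0⟩ j)) = _
  rw [show (∏ j, psi q w (u j) (Function.update b i ⟨0, hq0⟩ j))
      = ∏ j, Function.update (fun j => psi q w (u j) (b j)) i (psi q w (u i) ⟨0, hq0⟩) j from by
    rw [hfun]]
  rw [Finset.prod_update_of_mem (Finset.mem_univ i), psi_z0 q hq0]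

lemma Phi_update_idx (w : Fin (q-1) → Fin (q-1) → ℂ) (u : Fin n → ℕ)
    (b : Fin n → Fin q) (i : Fin n) (v : ℕ) :
    Phi q n w (Function.update u i v) b
      = psi q w v (b i) * ∏ j ∈ univ \ {i}, psi q w (u j) (b j) := by
  have hfun : (fun j => psi q w (Function.update u i v j) (b j))
      = Function.update (fun j => psi q w (u j) (b j)) i (psi q w v (b i)) := by
    funext j
    rcases eq_or_ne j i with rfl | hne
    · rw [Function.update_self, Function.update_self]
    · rw [Function.update_of_ne hne, Function.update_of_ne hne]
  show (∏ j, psi q w (Function.update u i v j) (b j)) = _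
  rw [show (∏ j, psi q w (Function.update u i v j) (b j))
      = ∏ j, Function.update (fun j => psi q w (u j) (b j)) i (psi q w v (b i)) j from by
    rw [hfun]]
  rw [Finset.prod_update_of_mem (Finset.mem_univ i)]

lemma ucs_insert (c : Fin n → Fin (q-1)) (S : Finset (Fin (tdeg q n c)))
    (j : Fin (tdeg q n c)) (hj : j ∉ S) :
    ucs q n c (insert j S) = Function.update (ucs q n c S) (emb q n c j) 1 := by
  funext i
  rcases eq_or_ne i (emb q n c j) with rfl | hne
  · rw [Function.update_self]
    have h1 := emb_mem q n c j
    have h2 : emb q n c j ∈ (insert j S).image (emb q n c) :=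
      (mem_image_emb_iff q n c _ j).mpr (Finset.mem_insert_self j S)
    simp [ucs, h1, h2]
  · rw [Function.update_of_ne hne]
    unfold ucs
    by_cases hc : (c i : ℕ) = 0
    · rw [if_pos hc, if_pos hc]
      have : i ∈ (insert j S).image (emb q n c) ↔ i ∈ S.image (emb q n c) := by
        simp only [Finset.mem_image, Finset.mem_insert]
        constructor
        · rintro ⟨j', hj', rfl⟩
          rcases hj' with rfl | hj'
          · exact absurd rfl hne
          · exact ⟨j', hj', rfl⟩
        · rintro ⟨j', hj', rfl⟩; exact ⟨j', Or.inr hj', rfl⟩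
      rw [if_congr this rfl rfl]
    · rw [if_neg hc, if_neg hc]

lemma image_emb_sdiff (c : Fin n → Fin (q-1)) (S : Finset (Fin (tdeg q n c))) :
    (univ \ S).image (emb q n c) = univ.filter (fun i => ucs q n c S i = 0) := by
  ext i
  constructor
  · intro him
    obtain ⟨j, hj, rfl⟩ := Finset.mem_image.mp him
    rw [Finset.mem_sdiff] at hj
    rw [Finset.mem_filter]
    exact ⟨Finset.mem_univ _, (ucs_eq_zero_iff q n c S _).mpr
      ⟨emb_mem q n c j, fun h2 => hj.2 ((mem_image_emb_iff q n c S j).mp h2)⟩⟩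
  · intro hfil
    rw [Finset.mem_filter] at hfil
    obtain ⟨hc, him⟩ := (ucs_eq_zero_iff q n c S _).mp hfil.2
    obtain ⟨j, rfl⟩ := emb_surj q n c i hc
    exact Finset.mem_image.mpr ⟨j, Finset.mem_sdiff.mpr ⟨Finset.mem_univ _,
      fun hjS => him (Finset.mem_image.mpr ⟨j, hjS, rfl⟩)⟩, rfl⟩

lemma upQ_Phi (hq : 2 ≤ q) (w : Fin (q-1) → Fin (q-1) → ℂ)
    (hw0 : ∀ (j : Fin (q-1)), (j:ℕ) = 0 → ∀ y, w j y = ((Real.sqrt ((q-1 : ℕ)))⁻¹ : ℝ))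
    (c : Fin n → Fin (q-1)) (S : Finset (Fin (tdeg q n c))) :
    upQ n q (Phi q n w (ucs q n c S))
      = ((Real.sqrt ((q-1 : ℕ)) : ℝ) : ℂ) •
        ∑ j ∈ univ \ S, Phi q n w (ucs q n c (insert j S)) := by
  have hq0 : 0 < q := by omega
  have hsqpos : (0:ℝ) < Real.sqrt ((q-1 : ℕ)) := Real.sqrt_pos.mpr (by
    have : (1:ℝ) ≤ ((q-1 : ℕ):ℝ) := by exact_mod_cast Nat.one_le_iff_ne_zero.mpr (by omega)
    linarith)
  have hsqne : ((Real.sqrt ((q-1 : ℕ)) : ℝ) : ℂ) ≠ 0 := by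
    exact_mod_cast ne_of_gt hsqpos
  ext1 b
  set u := ucs q n c S with hu
  set P : Fin n → ℂ := fun i => ∏ j ∈ univ \ {i}, psi q w (u j) (b j) with hP
  have hLHS : upQ n q (Phi q n w u) b
      = ∑ i ∈ univ, (if (b i : ℕ) ≠ 0 then (if u i = 0 then 1 else 0) * P i else 0) := by
    rw [upQ_eq q n hq0]
    rw [show supp b = univ.filter (fun i => (b i : ℕ) ≠ 0) from rfl, Finset.sum_filter]
    apply Finset.sum_congr rfl
    intro i _
    by_cases hbi : (b i : ℕ) ≠ 0
    · rw [if_pos hbi, if_pos hbi, Phi_update_arg q n hq0]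
    · rw [if_neg hbi, if_neg hbi]
  have hRHS : (((Real.sqrt ((q-1 : ℕ)) : ℝ) : ℂ) •
        ∑ j ∈ univ \ S, Phi q n w (ucs q n c (insert j S))) b
      = ∑ i ∈ univ, (if u i = 0 then (if (b i : ℕ) = 0 then 0 else 1) * P i else 0) := by
    rw [PiLp.smul_apply, VQsum_apply, smul_eq_mul, Finset.mul_sum]
    have hterm : ∀ j ∈ univ \ S,
        ((Real.sqrt ((q-1 : ℕ)) : ℝ) : ℂ) * Phi q n w (ucs q n c (insert j S)) b
        = (if (b (emb q n c j) : ℕ) = 0 then 0 else 1) * P (emb q n c j) := by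
      intro j hj
      rw [Finset.mem_sdiff] at hj
      rw [ucs_insert q n c S j hj.2, Phi_update_idx, psi_one q hq w hw0]
      by_cases hb : (b (emb q n c j) : ℕ) = 0
      · simp [hb]
      · rw [if_neg hb, if_neg hb, one_mul, ← mul_assoc, ← Complex.ofReal_mul,
          mul_inv_cancel₀ (ne_of_gt hsqpos)]
        simp
        rfl
    rw [Finset.sum_congr rfl hterm]
    have hre : ∑ j ∈ univ \ S, (if (b (emb q n c j) : ℕ) = 0 then 0 else 1) * P (emb q n c j)
        = ∑ i ∈ (univ \ S).image (emb q n c), (if (b i : ℕ) = 0 then 0 else 1) * P i :=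
      (Finset.sum_image (s := univ \ S) (g := emb q n c)
        (f := fun i => (if (b i : ℕ) = 0 then 0 else 1) * P i)
        (fun x _ y _ h => emb_inj q n c h)).symm
    rw [hre, image_emb_sdiff, Finset.sum_filter]
  rw [hLHS, hRHS]
  apply Finset.sum_congr rfl
  intro i _
  by_cases h1 : u i = 0 <;> by_cases h2 : (b i : ℕ) = 0 <;> simp [h1, h2]
lemma upB_single (t : ℕ) (S : Finset (Fin t)) :
    upB t (EuclideanSpace.single S 1)
      = ∑ j ∈ univ \ S, EuclideanSpace.single (insert j S) (1:ℂ) := by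
  ext1 T
  rw [VBsum_apply]
  have hL : upB t (EuclideanSpace.single S 1) T
      = if S ∈ T.powerset.filter (fun S' => S'.card + 1 = T.card) then (1:ℂ) else 0 := by
    rw [upB, PiLp.toLp_apply]
    rw [Finset.sum_congr rfl (fun S' _ => EuclideanSpace.single_apply S (1:ℂ) S')]
    exact Finset.sum_ite_eq' _ S (fun _ => (1:ℂ))
  rw [hL]
  have hR : ∀ j ∈ univ \ S, (EuclideanSpace.single (insert j S) (1:ℂ)) T
      = if T = insert j S then (1:ℂ) else 0 := fun j _ => EuclideanSpace.single_apply _ 1 T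
  rw [Finset.sum_congr rfl hR]
  by_cases hST : S ⊆ T ∧ S.card + 1 = T.card
  · rw [if_pos (Finset.mem_filter.mpr ⟨Finset.mem_powerset.mpr hST.1, hST.2⟩)]
    have key : ∀ j ∈ univ \ S, (T = insert j S ↔ j ∈ T \ S) := by
      intro j hj
      rw [Finset.mem_sdiff] at hj
      constructor
      · intro hT
        rw [Finset.mem_sdiff]
        exact ⟨hT ▸ Finset.mem_insert_self j S, hj.2⟩
      · intro hjT
        rw [Finset.mem_sdiff] at hjT
        have hsub : insert j S ⊆ T := Finset.insert_subset hjT.1 hST.1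
        have hcard : T.card ≤ (insert j S).card := by
          rw [Finset.card_insert_of_notMem hj.2]; omega
        exact (Finset.eq_of_subset_of_card_le hsub hcard).symm
    rw [Finset.sum_congr rfl (fun j hj => if_congr (key j hj) rfl rfl)]
    have hTS : T \ S ⊆ univ \ S := Finset.sdiff_subset_sdiff (Finset.subset_univ T) subset_rfl
    rw [← Finset.sum_filter]
    have : (univ \ S).filter (fun j => j ∈ T \ S) = T \ S := by
      ext j
      simp only [Finset.mem_filter, Finset.mem_sdiff, Finset.mem_univ, true_and]
      tauto
    rw [this, Finset.sum_const, Finset.card_sdiff_of_subset hST.1]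
    have : T.card - S.card = 1 := by omega
    rw [this]
    simp
  · rw [if_neg (by
      intro hmem
      rw [Finset.mem_filter, Finset.mem_powerset] at hmem
      exact hST hmem)]
    symm
    apply Finset.sum_eq_zero
    intro j hj
    rw [Finset.mem_sdiff] at hj
    rw [if_neg]
    intro hT
    apply hST
    constructor
    · rw [hT]; exact Finset.subset_insert j S
    · rw [hT, Finset.card_insert_of_notMem hj.2]

lemma theta_intertwine (hq : 2 ≤ q) (w : Fin (q-1) → Fin (q-1) → ℂ)
    (hw0 : ∀ (j : Fin (q-1)), (j:ℕ) = 0 → ∀ y, w j y = ((Real.sqrt ((q-1 : ℕ)))⁻¹ : ℝ))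
    (c : Fin n → Fin (q-1)) (f : VB (tdeg q n c)) :
    theta q n w c (((Real.sqrt ((q - 1 : ℕ)) : ℝ) : ℂ) • upB (tdeg q n c) f)
      = upQ n q (theta q n w c f) := by
  set s : ℂ := ((Real.sqrt ((q - 1 : ℕ)) : ℝ) : ℂ) with hs
  set A : VB (tdeg q n c) →ₗ[ℂ] VQ n q := (theta q n w c) ∘ₗ (s • upBlm (tdeg q n c)) with hA
  set B : VB (tdeg q n c) →ₗ[ℂ] VQ n q := (upQlm q n) ∘ₗ (theta q n w c) with hB
  have hAB : ∀ S : Finset (Fin (tdeg q n c)), A (EuclideanSpace.single S 1) = B (EuclideanSpace.single S 1) := by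
    intro S
    rw [hA, hB, LinearMap.comp_apply, LinearMap.comp_apply, LinearMap.smul_apply]
    have h1 : upBlm (tdeg q n c) (EuclideanSpace.single S 1) = upB (tdeg q n c) (EuclideanSpace.single S 1) := rfl
    have h2 : (upQlm q n) (theta q n w c (EuclideanSpace.single S 1))
        = upQ n q (theta q n w c (EuclideanSpace.single S 1)) := rfl
    rw [h1, h2, upB_single, theta_single, upQ_Phi q n hq w hw0, map_smul, map_sum]
    congr 1
    apply Finset.sum_congr rfl
    intro j _
    rw [theta_single]
  have key : A f = B f := by
    conv_lhs => rw [VB_decomp f]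
    conv_rhs => rw [VB_decomp f]
    rw [map_sum, map_sum]
    apply Finset.sum_congr rfl
    intro S _
    rw [map_smul, map_smul, hAB]
  have hAf : A f = theta q n w c (s • upB (tdeg q n c) f) := by
    rw [hA, LinearMap.comp_apply, LinearMap.smul_apply]
    rfl
  have hBf : B f = upQ n q (theta q n w c f) := rfl
  rw [← hAf, key, hBf]
lemma theta_eq_sum (w : Fin (q-1) → Fin (q-1) → ℂ) (c : Fin n → Fin (q-1))
    (f : VB (tdeg q n c)) :
    theta q n w c f = ∑ S : Finset (Fin (tdeg q n c)), f S • Phi q n w (ucs q n c S) := rfl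

lemma homComp_theta (w : Fin (q-1) → Fin (q-1) → ℂ) (c : Fin n → Fin (q-1))
    (g : VB (tdeg q n c)) (r : ℕ) :
    homComp r (theta q n w c g)
      = theta q n w c (WithLp.toLp 2 (fun S => if S.card + (n - tdeg q n c) = r then g S else 0)) := by
  ext1 a
  show (if rk a = r then theta q n w c g a else 0) = _
  rw [theta_apply_coord, theta_apply_coord]
  simp only [PiLp.toLp_apply]
  by_cases hr : rk a = r
  · rw [if_pos hr]
    apply Finset.sum_congr rfl
    intro S _
    by_cases hc : S.card + (n - tdeg q n c) = r
    · rw [if_pos hc]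
    · have hφ : Phi q n w (ucs q n c S) a = 0 := by
        by_contra hφ
        exact hc (by rw [rk_Phi q n w c S a hφ] at hr; omega)
      rw [if_neg hc, hφ, mul_zero, zero_mul]
  · rw [if_neg hr]
    symm
    apply Finset.sum_eq_zero
    intro S _
    by_cases hc : S.card + (n - tdeg q n c) = r
    · have hφ : Phi q n w (ucs q n c S) a = 0 := by
        by_contra hφ
        exact hr (by rw [rk_Phi q n w c S a hφ]; omega)
      rw [hφ, mul_zero]
    · rw [if_neg hc, zero_mul]

lemma theta_isHom (w : Fin (q-1) → Fin (q-1) → ℂ) (c : Fin n → Fin (q-1))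
    (g : VB (tdeg q n c)) (r : ℕ) (hg : isHomB r g) :
    isHomQ (r + (n - tdeg q n c)) (theta q n w c g) := by
  intro a ha
  rw [theta_apply_coord]
  apply Finset.sum_eq_zero
  intro S _
  by_cases hc : S.card = r
  · have hφ : Phi q n w (ucs q n c S) a = 0 := by
      by_contra hφ
      have := rk_Phi q n w c S a hφ
      omega
    rw [hφ, mul_zero]
  · rw [hg S hc, zero_mul]

lemma Phi_ucs_ne_zero (hq : 2 ≤ q) (w : Fin (q-1) → Fin (q-1) → ℂ)
    (hw : ∀ j j' : Fin (q-1), ∑ y, (starRingEnd ℂ) (w j y) * w j' y = if j = j' then 1 else 0)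
    (c : Fin n → Fin (q-1)) (S : Finset (Fin (tdeg q n c))) :
    Phi q n w (ucs q n c S) ≠ 0 := by
  intro h0
  have h1 := Phi_inner q n hq w hw (ucs q n c S) (ucs q n c S)
    (ucs_lt q n hq c S) (ucs_lt q n hq c S)
  rw [h0, if_pos rfl] at h1
  simp at h1

lemma exists_w (hq : 2 ≤ q) : ∃ w : Fin (q-1) → Fin (q-1) → ℂ,
    (∀ j j' : Fin (q-1), ∑ y, (starRingEnd ℂ) (w j y) * w j' y = if j = j' then 1 else 0) ∧
    (∀ (j : Fin (q-1)), (j:ℕ) = 0 → ∀ y, w j y = ((Real.sqrt ((q-1 : ℕ)))⁻¹ : ℝ)) := by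
  have hpos : (0:ℝ) < ((q-1 : ℕ):ℝ) := by
    have : 0 < q - 1 := by omega
    exact_mod_cast this
  set s0 : EuclideanSpace ℂ (Fin (q-1)) :=
    WithLp.toLp 2 (fun _ => (((Real.sqrt ((q-1 : ℕ)))⁻¹ : ℝ) : ℂ)) with hs0
  have hnorm : ‖s0‖ = 1 := by
    rw [EuclideanSpace.norm_eq]
    have hterm : ∀ i : Fin (q-1), ‖s0 i‖^2 = ((q-1 : ℕ):ℝ)⁻¹ := by
      intro i
      rw [hs0]
      rw [Complex.norm_real, Real.norm_eq_abs, abs_of_nonneg (by positivity), inv_pow,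
        Real.sq_sqrt hpos.le]
    rw [Finset.sum_congr rfl (fun i _ => hterm i), Finset.sum_const, Finset.card_univ,
      Fintype.card_fin, nsmul_eq_mul]
    rw [show ((q-1 : ℕ):ℝ) * ((q-1 : ℕ):ℝ)⁻¹ = 1 from mul_inv_cancel₀ hpos.ne']
    exact Real.sqrt_one
  have hcard : Module.finrank ℂ (EuclideanSpace ℂ (Fin (q-1))) = Fintype.card (Fin (q-1)) :=
    finrank_euclideanSpace
  set sset : Set (Fin (q-1)) := {j | (j:ℕ) = 0} with hset
  have hv : Orthonormal ℂ (sset.restrict (fun _ => s0)) := by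
    constructor
    · intro j; exact hnorm
    · intro i j hij
      exfalso
      apply hij
      apply Subtype.ext
      apply Fin.ext
      have hi : (i.1:ℕ) = 0 := i.2
      have hj : (j.1:ℕ) = 0 := j.2
      omega
  obtain ⟨b, hb⟩ := hv.exists_orthonormalBasis_extension_of_card_eq hcard
  refine ⟨fun j y => b j y, ?_, ?_⟩
  · intro j j'
    have := orthonormal_iff_ite.mp b.orthonormal j j'
    rw [PiLp.inner_apply] at this
    simpa [RCLike.inner_apply, mul_comm] using this
  · intro j hj y
    have h2 : b j = s0 := hb j hj
    show b j y = _
    rw [h2]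
lemma iSup_eq_top (hq : 2 ≤ q) (w : Fin (q-1) → Fin (q-1) → ℂ)
    (hw : ∀ j j' : Fin (q-1), ∑ y, (starRingEnd ℂ) (w j y) * w j' y = if j = j' then 1 else 0) :
    (⨆ c : Fin n → Fin (q-1), LinearMap.range (theta q n w c)) = ⊤ := by
  have hq1 : 0 < q - 1 := by omega
  set v : (Fin n → Fin q) → VQ n q := fun u => Phi q n w (fun i => (u i : ℕ)) with hv
  have hon : Orthonormal ℂ v := by
    rw [orthonormal_iff_ite]
    intro u u'
    rw [hv]
    rw [Phi_inner q n hq w hw _ _ (fun i => (u i).isLt) (fun i => (u' i).isLt)]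
    by_cases h : u = u'
    · simp [h]
    · rw [if_neg h, if_neg (fun hf => h (funext fun i => Fin.ext (congrFun hf i)))]
  haveI : Nonempty (Fin n → Fin q) := ⟨fun _ => ⟨0, by omega⟩⟩
  have hspan : Submodule.span ℂ (Set.range v) = ⊤ :=
    hon.linearIndependent.span_eq_top_of_card_eq_finrank (by simp [finrank_euclideanSpace])
  rw [eq_top_iff, ← hspan]
  rw [Submodule.span_le]
  rintro x ⟨u, rfl⟩
  -- construct c and S
  set c : Fin n → Fin (q-1) := fun i =>
    if (u i : ℕ) ≤ 1 then (⟨0, hq1⟩ : Fin (q-1))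
    else ⟨(u i : ℕ) - 1, by have := (u i).isLt; omega⟩ with hc
  set S : Finset (Fin (tdeg q n c)) :=
    univ.filter (fun j => (u (emb q n c j) : ℕ) = 1) with hS
  have hczero : ∀ i, (c i : ℕ) = 0 ↔ (u i : ℕ) ≤ 1 := by
    intro i
    rw [hc]
    by_cases h : (u i : ℕ) ≤ 1
    · simp [h]
    · simp only [if_neg h]
      constructor
      · intro h2; omega
      · intro h2; omega
  have hUcs : ucs q n c S = fun i => (u i : ℕ) := by
    funext i
    unfold ucs
    by_cases h1 : (c i : ℕ) = 0
    · rw [if_pos h1]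
      have hule : (u i : ℕ) ≤ 1 := (hczero i).mp h1
      have hmem : i ∈ S.image (emb q n c) ↔ (u i : ℕ) = 1 := by
        constructor
        · intro him
          obtain ⟨j, hj, rfl⟩ := Finset.mem_image.mp him
          rw [hS] at hj
          exact (Finset.mem_filter.mp hj).2
        · intro hone
          obtain ⟨j, rfl⟩ := emb_surj q n c i h1
          have hjS : j ∈ S := by
            rw [hS]
            exact Finset.mem_filter.mpr ⟨Finset.mem_univ _, hone⟩
          exact Finset.mem_image.mpr ⟨j, hjS, rfl⟩
      by_cases h2 : (u i : ℕ) = 1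
      · rw [if_pos (hmem.mpr h2), h2]
      · rw [if_neg (fun hmm => h2 (hmem.mp hmm))]
        omega
    · rw [if_neg h1]
      have hgt : ¬ (u i : ℕ) ≤ 1 := fun hle => h1 ((hczero i).mpr hle)
      have : (c i : ℕ) = (u i : ℕ) - 1 := by
        rw [hc]; simp only [if_neg hgt]
      omega
  have : v u = theta q n w c (EuclideanSpace.single S 1) := by
    rw [theta_single, hUcs]
  rw [this]
  have hmem : theta q n w c (EuclideanSpace.single S 1) ∈ LinearMap.range (theta q n w c) :=
    LinearMap.mem_range.mpr ⟨_, rfl⟩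
  exact SetLike.mem_coe.mpr (Submodule.mem_iSup_of_mem c hmem)

lemma count_lemma (hq : 2 ≤ q) (l : ℕ) (hl : l ≤ n) :
    Nat.card {c : Fin n → Fin (q-1) // tdeg q n c = n - l} = (q-2)^l * n.choose l := by
  have hq1 : 0 < q - 1 := by omega
  rw [Nat.card_eq_fintype_card, Fintype.card_subtype]
  have h1 : (univ.filter fun c : Fin n → Fin (q-1) => tdeg q n c = n - l)
      = univ.filter (fun c => (univ.filter fun i => (c i : ℕ) ≠ 0).card = l) := by
    apply Finset.filter_congr
    intro c _
    have h2 := card_filter_ne q n c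
    have h3 := tdeg_le q n c
    constructor <;> intro h4 <;> omega
  rw [h1]
  have h5 : (univ.filter fun c : Fin n → Fin (q-1) =>
        (univ.filter fun i => (c i : ℕ) ≠ 0).card = l)
      = (Finset.powersetCard l (univ : Finset (Fin n))).biUnion
          (fun s => univ.filter (fun c : Fin n → Fin (q-1) =>
            (univ.filter fun i => (c i : ℕ) ≠ 0) = s)) := by
    ext c
    simp only [Finset.mem_filter, Finset.mem_univ, true_and, Finset.mem_biUnion,
      Finset.mem_powersetCard]
    constructor
    · intro hcl
      exact ⟨_, ⟨Finset.subset_univ _, hcl⟩, rfl⟩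
    · rintro ⟨s, ⟨_, hsl⟩, rfl⟩
      exact hsl
  rw [h5, Finset.card_biUnion]
  · have h6 : ∀ s ∈ Finset.powersetCard l (univ : Finset (Fin n)),
        (univ.filter (fun c : Fin n → Fin (q-1) =>
          (univ.filter fun i => (c i : ℕ) ≠ 0) = s)).card = (q-2)^l := by
      intro s hs
      rw [Finset.mem_powersetCard] at hs
      have hset : (univ.filter (fun c : Fin n → Fin (q-1) =>
            (univ.filter fun i => (c i : ℕ) ≠ 0) = s))
          = Fintype.piFinset (fun i => if i ∈ s
              then (univ.filter fun x : Fin (q-1) => (x:ℕ) ≠ 0)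
              else {(⟨0, hq1⟩ : Fin (q-1))}) := by
        ext c
        simp only [Finset.mem_filter, Finset.mem_univ, true_and, Fintype.mem_piFinset]
        constructor
        · intro hc i
          by_cases hi : i ∈ s
          · rw [if_pos hi]
            rw [← hc] at hi
            exact Finset.mem_filter.mpr ⟨Finset.mem_univ _, (Finset.mem_filter.mp hi).2⟩
          · rw [if_neg hi]
            rw [← hc] at hi
            have : ¬ (c i : ℕ) ≠ 0 := fun hne =>
              hi (Finset.mem_filter.mpr ⟨Finset.mem_univ _, hne⟩)
            rw [Finset.mem_singleton]
            apply Fin.ext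
            simpa using this
        · intro hc
          ext i
          simp only [Finset.mem_filter, Finset.mem_univ, true_and]
          have hci := hc i
          by_cases hi : i ∈ s
          · rw [if_pos hi] at hci
            exact ⟨fun _ => hi, fun _ => (Finset.mem_filter.mp hci).2⟩
          · rw [if_neg hi, Finset.mem_singleton] at hci
            constructor
            · intro hne; exact absurd (by rw [hci]) hne
            · intro hmem; exact absurd hmem hi
      rw [hset, Fintype.card_piFinset]
      have hcards : ∀ i : Fin n, (if i ∈ s
          then (univ.filter fun x : Fin (q-1) => (x:ℕ) ≠ 0)
          else {(⟨0, hq1⟩ : Fin (q-1))}).card = if i ∈ s then q - 2 else 1 := by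
        intro i
        by_cases hi : i ∈ s
        · rw [if_pos hi, if_pos hi]
          have hz : (univ.filter fun x : Fin (q-1) => (x:ℕ) = 0) = {(⟨0, hq1⟩ : Fin (q-1))} := by
            ext x
            simp [Fin.ext_iff]
          have hsum := Finset.card_filter_add_card_filter_not
            (s := (univ : Finset (Fin (q-1)))) (p := fun x => (x:ℕ) = 0)
          rw [hz] at hsum
          simp only [Finset.card_singleton, Finset.card_univ, Fintype.card_fin] at hsum
          have : (univ.filter fun x : Fin (q-1) => ¬ (x:ℕ) = 0)
              = (univ.filter fun x : Fin (q-1) => (x:ℕ) ≠ 0) := rfl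
          rw [this] at hsum
          omega
        · rw [if_neg hi, if_neg hi, Finset.card_singleton]
      rw [Finset.prod_congr rfl (fun i _ => hcards i), ← Finset.prod_filter,
        Finset.filter_mem_eq_inter, Finset.univ_inter, Finset.prod_const, hs.2]
    rw [Finset.sum_congr rfl h6, Finset.sum_const, Finset.card_powersetCard,
      Finset.card_univ, Fintype.card_fin, smul_eq_mul, mul_comm]
  · intro s hs s' hs' hne
    apply Finset.disjoint_left.mpr
    intro c hc hc'
    rw [Finset.mem_filter] at hc hc'
    exact hne (by rw [← hc.2, ← hc'.2])
end UBS

theorem orthogonal_decomposition_upper_boolean (q n : ℕ) (hq : 2 ≤ q) :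
    ∃ (ι : Type) (_ : Fintype ι) (W : ι → Submodule ℂ (VQ n q)) (t : ι → ℕ),
      (∀ c c', c ≠ c' → ∀ f ∈ W c, ∀ g ∈ W c', inner ℂ f g = (0 : ℂ)) ∧
      (⨆ c, W c) = ⊤ ∧
      (∀ c, IsUpperBooleanSubspace q n (t c) (W c)) ∧
      (∀ l : ℕ, l ≤ n →
        Nat.card {c : ι // t c = n - l} = (q - 2) ^ l * n.choose l) := by
  classical
  open UBS Finset in
  obtain ⟨w, hw, hw0⟩ := UBS.exists_w q hq
  refine ⟨Fin n → Fin (q-1), inferInstance,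
    fun c => LinearMap.range (UBS.theta q n w c), fun c => UBS.tdeg q n c, ?_, ?_, ?_, ?_⟩
  · -- orthogonality
    intro c c' hne f hf g hg
    obtain ⟨gf, rfl⟩ := LinearMap.mem_range.mp hf
    obtain ⟨gg, rfl⟩ := LinearMap.mem_range.mp hg
    rw [UBS.theta_eq_sum, UBS.theta_eq_sum, sum_inner]
    apply Finset.sum_eq_zero
    intro S _
    rw [inner_sum]
    apply Finset.sum_eq_zero
    intro S' _
    rw [inner_smul_left, inner_smul_right,
      UBS.Phi_inner q n hq w hw _ _ (UBS.ucs_lt q n hq c S) (UBS.ucs_lt q n hq c' S'),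
      if_neg (fun he => hne (UBS.ucs_inj_c q n c c' S S' he))]
    simp
  · exact UBS.iSup_eq_top q n hq w hw
  · -- upper Boolean subspaces
    intro c
    have htle := UBS.tdeg_le q n c
    refine ⟨htle, ?_, ?_, ?_, ?_⟩
    · -- homComp closed
      intro f hf r
      obtain ⟨g, rfl⟩ := LinearMap.mem_range.mp hf
      rw [UBS.homComp_theta]
      exact LinearMap.mem_range.mpr ⟨_, rfl⟩
    · -- rank set
      ext r
      simp only [Set.mem_setOf_eq, Set.mem_Icc]
      constructor
      · rintro ⟨f, hf, hne0, hhom⟩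
        obtain ⟨g, rfl⟩ := LinearMap.mem_range.mp hf
        have hg : g ≠ 0 := by
          rintro rfl
          rw [map_zero] at hne0
          exact hne0 rfl
        obtain ⟨S, hS⟩ : ∃ S, g S ≠ 0 := by
          by_contra hc
          push_neg at hc
          exact hg (PiLp.ext hc)
        set gr : VB (UBS.tdeg q n c) := WithLp.toLp 2 (fun S' =>
          if S'.card + (n - UBS.tdeg q n c) = S.card + (n - UBS.tdeg q n c) then g S' else 0)
          with hgr
        have hcomp := UBS.homComp_theta q n w c g (S.card + (n - UBS.tdeg q n c))
        have hgrne : gr ≠ 0 := by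
          intro h0
          have := congrArg (fun x => x.ofLp S) h0
          rw [hgr] at this
          simp only [PiLp.toLp_apply, if_pos rfl] at this
          exact hS this
        have hthne : UBS.theta q n w c gr ≠ 0 := by
          intro h0
          have h2 := UBS.theta_inner q n hq w hw c gr gr
          rw [h0] at h2
          rw [inner_zero_left] at h2
          exact hgrne (inner_self_eq_zero.mp h2.symm)
        have hcompne : homComp (S.card + (n - UBS.tdeg q n c)) (UBS.theta q n w c g) ≠ 0 := by
          rw [hcomp]
          exact hthne
        obtain ⟨a, ha⟩ : ∃ a, homComp (S.card + (n - UBS.tdeg q n c))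
            (UBS.theta q n w c g) a ≠ 0 := by
          by_contra hcon
          push_neg at hcon
          exact hcompne (PiLp.ext hcon)
        have hrk : rk a = S.card + (n - UBS.tdeg q n c) ∧ UBS.theta q n w c g a ≠ 0 := by
          by_cases h2 : rk a = S.card + (n - UBS.tdeg q n c)
          · refine ⟨h2, ?_⟩
            intro h3
            apply ha
            show (if rk a = S.card + (n - UBS.tdeg q n c)
              then UBS.theta q n w c g a else 0) = 0
            rw [if_pos h2, h3]
          · exfalso
            apply ha
            show (if rk a = S.card + (n - UBS.tdeg q n c)
              then UBS.theta q n w c g a else 0) = 0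
            rw [if_neg h2]
        have hreq : r = S.card + (n - UBS.tdeg q n c) := by
          by_contra hrne
          exact hrk.2 (hhom a (by rw [hrk.1]; exact fun h => hrne h.symm))
        have hSle : S.card ≤ UBS.tdeg q n c := by
          have := Finset.card_le_univ S
          simpa using this
        omega
      · rintro ⟨hr1, hr2⟩
        have hcard : r - (n - UBS.tdeg q n c) ≤ (univ : Finset (Fin (UBS.tdeg q n c))).card := by
          rw [Finset.card_univ, Fintype.card_fin]
          omega
        obtain ⟨S, _, hScard⟩ := Finset.exists_subset_card_eq hcard
        refine ⟨UBS.theta q n w c (EuclideanSpace.single S 1),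
          LinearMap.mem_range.mpr ⟨_, rfl⟩, ?_, ?_⟩
        · rw [UBS.theta_single]
          exact UBS.Phi_ucs_ne_zero q n hq w hw c S
        · intro a ha
          rw [UBS.theta_single]
          by_contra hφ
          have := UBS.rk_Phi q n w c S a hφ
          omega
    · -- up closed
      intro f hf
      obtain ⟨g, rfl⟩ := LinearMap.mem_range.mp hf
      rw [← UBS.theta_intertwine q n hq w hw0]
      exact LinearMap.mem_range.mpr ⟨_, rfl⟩
    · -- the isometry
      refine ⟨(UBS.theta q n w c).isometryOfInner
        (fun x y => UBS.theta_inner q n hq w hw c x y), ?_, ?_, ?_⟩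
      · rw [LinearMap.isometryOfInner_toLinearMap]
      · intro f r hf
        rw [LinearMap.coe_isometryOfInner]
        exact UBS.theta_isHom q n w c f r hf
      · intro f
        rw [LinearMap.coe_isometryOfInner]
        exact UBS.theta_intertwine q n hq w hw0 c f
  · exact fun l hl => UBS.count_lemma q n hq l hl
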